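/- Let G be an abelian group and T ⊊ G a finite tile, and fix x ∈ G with T + x ≠ T. Set T' = T + x, C↓ = T' \ T, C↑ = T \ T', and A = T ∪ T'. For integers d ≥ 1 and 1 ≤ i ≤ d, let C_{i,d} = C↓ × ⋯ × C↓ × C↑ × C↓ × ⋯ × C↓ ⊂ A^d (with C↑ in the i-th coordinate), and let C_{0,d} = (C↓)^d. Then for every d ≥ 1 and 0 ≤ i ≤ d, the set A^d \ C_{i,d} can be partitioned into copies of T, where a copy of T is a translate of {0}^{j-1} × T × {0}^{d-j} in G^d (for some coordinate j) that lies inside A^d. -/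
import Mathlib


def IsCopy {G : Type*} [AddCommGroup G] {d : ℕ} (T : Set G)
    (S : Set (Fin d → G)) : Prop :=
  ∃ (j : Fin d) (y : Fin d → G),
    S = {z | ∃ t ∈ T, z = Function.update y j (y j + t)}

def Tilable {G : Type*} [AddCommGroup G] {d : ℕ} (T : Set G)
    (X : Set (Fin d → G)) : Prop :=
  ∃ P : Set (Set (Fin d → G)),
    (∀ S ∈ P, IsCopy T S) ∧ P.PairwiseDisjoint id ∧ ⋃₀ P = X

/-- `C_{i,d} ⊆ A^d`: the product with `C↑` in coordinate `i` and `C↓` in all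
other coordinates; for `io = none` this is `C_{0,d} = (C↓)^d`. -/
def Cset {G : Type*} (Cdown Cup : Set G) {d : ℕ} (io : Option (Fin d)) :
    Set (Fin d → G) :=
  {z | ∀ j : Fin d, z j ∈ if (some j = io) then Cup else Cdown}

/-- with `T' = T + x ≠ T`, `C↓ = T' \ T`, `C↑ = T \ T'`,
`A = T ∪ T'`, the set `A^d \ C_{i,d}` is `T`-tilable for all `0 ≤ i ≤ d`. -/
theorem removedCset {G : Type*} [AddCommGroup G] (T : Set G)
    (hTfin : T.Finite) (hTne : T.Nonempty) (hTprop : T ≠ Set.univ)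
    (x : G) (hx : (fun t => t + x) '' T ≠ T)
    (d : ℕ) (hd : 1 ≤ d) (io : Option (Fin d)) :
    Tilable T
      ({z : Fin d → G | ∀ j, z j ∈ (T ∪ (fun t => t + x) '' T)} \
        Cset (((fun t => t + x) '' T) \ T) (T \ ((fun t => t + x) '' T)) io) := by
  classical
  set T' : Set G := (fun t => t + x) '' T with hT'def
  set A : Set G := T ∪ T' with hAdef
  set comp : Fin d → Set G := fun j => if some j = io then T \ T' else T' \ T
    with hcompdef
  set sh : Fin d → G := fun j => if some j = io then x else 0 with hshdef
  have key : ∀ j : Fin d, A \ comp j = {g | ∃ t ∈ T, g = sh j + t} := by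
    intro j
    by_cases h : some j = io
    · have h1 : comp j = T \ T' := by simp [hcompdef, h]
      have h2 : sh j = x := by simp [hshdef, h]
      rw [h1, h2]
      ext g
      constructor
      · rintro ⟨hgA, hgc⟩
        have hgT' : g ∈ T' := by
          rcases hgA with hgT | hgT'
          · by_contra hn; exact hgc ⟨hgT, hn⟩
          · exact hgT'
        rcases hgT' with ⟨t, ht, rfl⟩
        exact ⟨t, ht, (add_comm t x)⟩
      · rintro ⟨t, ht, rfl⟩
        have hgT' : x + t ∈ T' := ⟨t, ht, add_comm t x⟩
        exact ⟨Or.inr hgT', fun hc => hc.2 hgT'⟩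
    · have h1 : comp j = T' \ T := by simp [hcompdef, h]
      have h2 : sh j = 0 := by simp [hshdef, h]
      rw [h1, h2]
      ext g
      constructor
      · rintro ⟨hgA, hgc⟩
        have hgT : g ∈ T := by
          rcases hgA with hgT | hgT'
          · exact hgT
          · by_contra hn; exact hgc ⟨hgT', hn⟩
        exact ⟨g, hgT, (zero_add g).symm⟩
      · rintro ⟨t, ht, rfl⟩
        rw [zero_add]
        exact ⟨Or.inl ht, fun hc => hc.2 ht⟩
  have compA : ∀ j : Fin d, comp j ⊆ A := by
    intro j g hg
    by_cases h : some j = io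
    · rw [hcompdef] at hg
      simp only [h, if_pos] at hg
      exact Or.inl hg.1
    · rw [hcompdef] at hg
      simp only [h, if_neg, if_false] at hg
      exact Or.inr hg.1
  have memkey : ∀ (j : Fin d) (t : G), t ∈ T → sh j + t ∈ A \ comp j := by
    intro j t ht
    rw [key j]
    exact ⟨t, ht, rfl⟩
  -- Cset membership unfolds to comp
  have hCset : ∀ z : Fin d → G,
      z ∈ Cset (T' \ T) (T \ T') io ↔ ∀ j, z j ∈ comp j := by
    intro z
    unfold Cset
    constructor
    · intro h j
      have := h j
      by_cases hj : some j = io <;> simp [hcompdef, hj] at this ⊢ <;> exact this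
    · intro h j
      have := h j
      by_cases hj : some j = io <;> simp [hcompdef, hj] at this ⊢ <;> exact this
  refine ⟨{S | ∃ (j : Fin d) (y : Fin d → G),
      (∀ k, k < j → y k ∈ comp k) ∧ (∀ k, j < k → y k ∈ A) ∧ y j = sh j ∧
      S = {z | ∃ t ∈ T, z = Function.update y j (y j + t)}}, ?_, ?_, ?_⟩
  · rintro S ⟨j, y, _, _, _, rfl⟩
    exact ⟨j, y, rfl⟩
  · rintro S ⟨j, y, hlt, hgt, hj, rfl⟩ S' ⟨j', y', hlt', hgt', hj', rfl⟩ hne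
    simp only [Function.onFun, id_eq]
    rw [Set.disjoint_left]
    rintro z ⟨t, ht, rfl⟩ ⟨t', ht', heq⟩
    rcases lt_trichotomy j j' with hjj | hjj | hjj
    · -- coordinate j : from S, z j ∉ comp j; from S', z j = y' j ∈ comp j
      have h1 : Function.update y j (y j + t) j = y j + t := Function.update_self _ _ _
      have h2 : Function.update y' j' (y' j' + t') j = y' j :=
        Function.update_of_ne (ne_of_lt hjj) _ _
      have h3 : y j + t ∉ comp j := by
        rw [hj]; exact (memkey j t ht).2
      have h4 : y' j ∈ comp j := hlt' j hjj
      rw [heq, h2] at h1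
      exact h3 (h1 ▸ h4)
    · -- j = j' : then y = y', so S = S', contradiction
      subst hjj
      have hy : y = y' := by
        funext k
        by_cases hk : k = j
        · subst hk; rw [hj, hj']
        · have := congrFun heq k
          rwa [Function.update_of_ne hk, Function.update_of_ne hk] at this
      exact hne (by rw [hy])
    · have h1 : Function.update y' j' (y' j' + t') j' = y' j' + t' :=
        Function.update_self _ _ _
      have h2 : Function.update y j (y j + t) j' = y j' :=
        Function.update_of_ne (ne_of_lt hjj) _ _
      have h3 : y' j' + t' ∉ comp j' := by
        rw [hj']; exact (memkey j' t' ht').2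
      have h4 : y j' ∈ comp j' := hlt j' hjj
      rw [← heq, h2] at h1
      exact h3 (h1 ▸ h4)
  · ext z
    constructor
    · rintro ⟨S, ⟨j, y, hlt, hgt, hj, rfl⟩, t, ht, rfl⟩
      constructor
      · intro k
        by_cases hk : k = j
        · subst hk
          rw [Function.update_self, hj]
          exact (memkey k t ht).1
        · rw [Function.update_of_ne hk]
          rcases lt_trichotomy k j with h | h | h
          · exact compA k (hlt k h)
          · exact absurd h hk
          · exact hgt k h
      · intro hC
        rw [hCset] at hC
        have := hC j
        rw [Function.update_self, hj] at this
        exact (memkey j t ht).2 this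
    · rintro ⟨hA, hC⟩
      rw [hCset] at hC
      push_neg at hC
      have hne : (Finset.univ.filter (fun k => z k ∉ comp k)).Nonempty := by
        rcases hC with ⟨k, hk⟩
        exact ⟨k, by simp [hk]⟩
      set j := (Finset.univ.filter (fun k => z k ∉ comp k)).min' hne with hjdef
      have hjmem : z j ∉ comp j := by
        have := (Finset.univ.filter (fun k => z k ∉ comp k)).min'_mem hne
        simpa using this
      have hjmin : ∀ k, k < j → z k ∈ comp k := by
        intro k hk
        by_contra hn
        have : j ≤ k := Finset.min'_le _ _ (by simp [hn])
        exact absurd hk (not_lt.2 this)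
      have hzj : z j ∈ A \ comp j := ⟨hA j, hjmem⟩
      rw [key j] at hzj
      rcases hzj with ⟨t, ht, hzt⟩
      refine ⟨{w | ∃ t ∈ T, w = Function.update (Function.update z j (sh j)) j
        (Function.update z j (sh j) j + t)},
        ⟨j, Function.update z j (sh j), ?_, ?_, Function.update_self _ _ _, rfl⟩,
        t, ht, ?_⟩
      · intro k hk
        rw [Function.update_of_ne (ne_of_lt hk)]
        exact hjmin k hk
      · intro k hk
        rw [Function.update_of_ne (ne_of_gt hk)]
        exact hA k
      · rw [Function.update_self, Function.update_idem, ← hzt,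
          Function.update_eq_self]
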